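/- Let n, r, p be positive integers with r ≤ n, and let 0 ≤ ε < 1/2. Every (p,ε)-data structure of length N for the inner product problem IP_{n,r} satisfies N ≥ (1/2) · 2^{(log₂ B(n,r) − 2 log₂(1/(1−2ε)) − 1)/p}. -/

import Mathlib

/-- Hamming weight of a bit string. -/
def wt {n : ℕ} (y : Fin n → Bool) : ℕ := (Finset.univ.filter (fun i => y i = true)).card

/-- Inner product mod 2 of two bit strings, as an element of `ZMod 2`. -/
def ip {n : ℕ} (x y : Fin n → Bool) : ZMod 2 := ∑ i, if x i && y i then 1 else 0

/-- The sequence of answers obtained by the (adaptive) decoder probing the string `y`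
on query `q` with seed `s`: the `k`-th probe position may depend on the query, the seed,
and the previous `k` answers. -/
def runAns {N p : ℕ} {Q S : Type} (probe : (k : Fin p) → Q → S → (Fin k.val → Bool) → Fin N)
    (y : Fin N → Bool) (q : Q) (s : S) : (k : Fin p) → Bool
  | k => y (probe k q s (fun j => runAns probe y q s ⟨j.val, j.isLt.trans k.isLt⟩))
  termination_by k => k.val

/-- A `(p,δ,ε)`-error-correcting data structure of length `N` for `f : D → Q → A`:
an encoding `enc : D → {0,1}^N` together with a randomized decoder (seed set `Fin seeds`,
adaptive probe-choice functions, and an output function) such that for every query `q`,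
every data item `x`, and every `y ∈ {0,1}^N` within Hamming distance `δN` of `enc x`,
the decoder outputs `f x q` with probability at least `1 - ε` over a uniform seed. -/
structure ECDS (D Q A : Type) [DecidableEq A] (p N : ℕ) (δ ε : ℝ) (f : D → Q → A) where
  enc : D → (Fin N → Bool)
  seeds : ℕ
  seeds_pos : 0 < seeds
  probe : (k : Fin p) → Q → Fin seeds → (Fin k.val → Bool) → Fin N
  out : Q → Fin seeds → (Fin p → Bool) → A
  correct : ∀ (q : Q) (x : D) (y : Fin N → Bool),
    (hammingDist y (enc x) : ℝ) ≤ δ * N →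
    (1 - ε) * (seeds : ℝ) ≤
      ((Finset.univ.filter (fun s : Fin seeds =>
        out q s (runAns probe y q s) = f x q)).card : ℝ)

namespace IPLB

noncomputable def ch (b : Bool) : ℝ := if b then -1 else 1
noncomputable def ch2 (z : ZMod 2) : ℝ := if z = 1 then -1 else 1
noncomputable def chi {ι : Type*} (T : Finset ι) (y : ι → Bool) : ℝ := ∏ i ∈ T, ch (y i)

lemma ch_sq (b : Bool) : ch b * ch b = 1 := by cases b <;> simp [ch]
lemma ch_not (b : Bool) : ch (!b) = - ch b := by cases b <;> simp [ch]
lemma ch2_mul (a b : ZMod 2) : ch2 (a + b) = ch2 a * ch2 b := by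
  rcases (by decide : ∀ a : ZMod 2, a = 0 ∨ a = 1) a with rfl | rfl <;> rcases (by decide : ∀ a : ZMod 2, a = 0 ∨ a = 1) b with rfl | rfl <;> simp [ch2]
lemma ch2_sq (a : ZMod 2) : ch2 a * ch2 a = 1 := by
  rcases (by decide : ∀ a : ZMod 2, a = 0 ∨ a = 1) a with rfl | rfl <;> simp [ch2]
lemma ch2_mul_eq (a b : ZMod 2) : ch2 a * ch2 b = if a = b then 1 else -1 := by
  rcases (by decide : ∀ a : ZMod 2, a = 0 ∨ a = 1) a with rfl | rfl <;> rcases (by decide : ∀ a : ZMod 2, a = 0 ∨ a = 1) b with rfl | rfl <;> simp [ch2]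

lemma sum_prod_bool {ι : Type*} [Fintype ι] [DecidableEq ι] (g : ι → Bool → ℝ) :
    ∑ y : ι → Bool, ∏ i, g i (y i) = ∏ i, (g i false + g i true) := by
  have : ∀ i : ι, g i false + g i true = ∑ b : Bool, g i b := by
    intro i; rw [Fintype.sum_bool]; ring
  simp_rw [this]
  rw [Finset.prod_univ_sum, Fintype.piFinset_univ]

section Cube
variable {ι : Type*} [Fintype ι] [DecidableEq ι]

lemma chi_sq (T : Finset ι) (y : ι → Bool) : chi T y * chi T y = 1 := by
  unfold chi
  rw [← Finset.prod_mul_distrib]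
  rw [Finset.prod_congr rfl (fun i _ => ch_sq (y i))]
  simp

/-- Dual orthogonality: summing over all characters. -/
lemma chi_dual (y z : ι → Bool) :
    ∑ T : Finset ι, chi T y * chi T z
      = if y = z then (2 : ℝ) ^ (Fintype.card ι) else 0 := by
  have h1 : ∀ T : Finset ι, chi T y * chi T z = ∏ i ∈ T, (ch (y i) * ch (z i)) := by
    intro T; rw [Finset.prod_mul_distrib]; rfl
  simp_rw [h1]
  have h2 : ∑ T : Finset ι, ∏ i ∈ T, (ch (y i) * ch (z i))
      = ∑ T ∈ (Finset.univ : Finset ι).powerset, ∏ i ∈ T, (ch (y i) * ch (z i)) := by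
    rw [Finset.powerset_univ]
  rw [h2]
  have h3 := Finset.prod_add (fun i => ch (y i) * ch (z i)) (fun _ => (1:ℝ))
    (Finset.univ : Finset ι)
  simp only [Finset.prod_const_one, mul_one] at h3
  rw [← h3]
  by_cases hyz : y = z
  · subst hyz
    simp only [if_pos]
    have : ∀ i : ι, ch (y i) * ch (y i) + 1 = 2 := by intro i; rw [ch_sq]; norm_num
    simp_rw [this]
    simp [Finset.prod_const, Finset.card_univ]
  · rw [if_neg hyz]
    have : ∃ i, y i ≠ z i := by
      by_contra hco; push_neg at hco; exact hyz (funext hco)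
    obtain ⟨i, hi⟩ := this
    apply Finset.prod_eq_zero (Finset.mem_univ i)
    cases hy : y i <;> cases hz : z i <;> simp [hy, hz] at hi ⊢ <;> simp [ch]

/-- Fourier expansion / completeness. -/
lemma fourier_expand (h : (ι → Bool) → ℝ) (z : ι → Bool) :
    ∑ T : Finset ι, (∑ y : ι → Bool, h y * chi T y) * chi T z
      = (2 : ℝ) ^ (Fintype.card ι) * h z := by
  simp_rw [Finset.sum_mul, mul_assoc]
  rw [Finset.sum_comm]
  have : ∀ y : ι → Bool, ∑ T : Finset ι, h y * (chi T y * chi T z)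
      = h y * (if y = z then (2 : ℝ) ^ (Fintype.card ι) else 0) := by
    intro y; rw [← Finset.mul_sum, chi_dual]
  simp_rw [this]
  simp [Finset.sum_ite_eq, mul_comm]

/-- Parseval. -/
lemma parseval (h : (ι → Bool) → ℝ) :
    ∑ T : Finset ι, (∑ y : ι → Bool, h y * chi T y) ^ 2
      = (2 : ℝ) ^ (Fintype.card ι) * ∑ y : ι → Bool, (h y) ^ 2 := by
  have key : ∀ T : Finset ι, (∑ y : ι → Bool, h y * chi T y) ^ 2
      = ∑ y : ι → Bool, h y * ((∑ x : ι → Bool, h x * chi T x) * chi T y) := by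
    intro T
    have : ∀ y : ι → Bool, h y * ((∑ x : ι → Bool, h x * chi T x) * chi T y)
        = (∑ x : ι → Bool, h x * chi T x) * (h y * chi T y) := by intro y; ring
    simp_rw [this]
    rw [← Finset.mul_sum, sq]
  simp_rw [key]
  rw [Finset.sum_comm]
  have : ∀ y : ι → Bool, ∑ T : Finset ι, h y * ((∑ x : ι → Bool, h x * chi T x) * chi T y)
      = h y * ((2 : ℝ) ^ (Fintype.card ι) * h y) := by
    intro y
    rw [← Finset.mul_sum, fourier_expand]
  simp_rw [this]
  rw [Finset.mul_sum]
  congr 1; funext y; ring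

end Cube

/-- Bessel's inequality, concrete unnormalized form. -/
lemma bessel {κ X : Type*} [Fintype κ] [Fintype X] [DecidableEq κ]
    (v : κ → X → ℝ) (c : ℝ) (hc : 0 < c)
    (orth : ∀ i j, ∑ x, v i x * v j x = if i = j then c else 0)
    (g : X → ℝ) :
    ∑ i, (∑ x, g x * v i x) ^ 2 ≤ c * ∑ x, (g x) ^ 2 := by
  set G : κ → ℝ := fun i => ∑ x, g x * v i x with hG
  have key : (0:ℝ) ≤ ∑ x, (c * g x - ∑ i, G i * v i x) ^ 2 :=
    Finset.sum_nonneg fun x _ => sq_nonneg _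
  have expand : ∑ x, (c * g x - ∑ i, G i * v i x) ^ 2
      = c ^ 2 * (∑ x, (g x) ^ 2) - 2 * c * (∑ x, g x * ∑ i, G i * v i x)
        + ∑ x, (∑ i, G i * v i x) ^ 2 := by
    have hpt : ∀ x, (c * g x - ∑ i, G i * v i x) ^ 2
        = c ^ 2 * (g x) ^ 2 - 2 * c * (g x * ∑ i, G i * v i x) + (∑ i, G i * v i x) ^ 2 := by
      intro x; ring
    simp_rw [hpt, Finset.sum_add_distrib, Finset.sum_sub_distrib, ← Finset.mul_sum]
  have e1 : ∑ x, g x * ∑ i, G i * v i x = ∑ i, G i ^ 2 := by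
    have : ∀ x, g x * ∑ i, G i * v i x = ∑ i, G i * (g x * v i x) := by
      intro x; rw [Finset.mul_sum]; congr 1; funext i; ring
    simp_rw [this]
    rw [Finset.sum_comm]
    congr 1; funext i
    rw [← Finset.mul_sum]
    show G i * G i = G i ^ 2
    rw [sq]
  have e2 : ∑ x, (∑ i, G i * v i x) ^ 2 = c * ∑ i, G i ^ 2 := by
    have : ∀ x, (∑ i, G i * v i x) ^ 2
        = ∑ i, ∑ j, (G i * G j) * (v i x * v j x) := by
      intro x
      rw [sq, Finset.sum_mul_sum]
      congr 1; funext i; congr 1; funext j; ring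
    simp_rw [this]
    rw [Finset.sum_comm]
    have : ∀ i, ∑ x, ∑ j, (G i * G j) * (v i x * v j x) = c * G i ^ 2 := by
      intro i
      rw [Finset.sum_comm]
      have h2 : ∀ j, ∑ x, (G i * G j) * (v i x * v j x)
          = (G i * G j) * (if i = j then c else 0) := by
        intro j; rw [← Finset.mul_sum, orth]
      simp_rw [h2]
      simp only [mul_ite, mul_zero]
      rw [Finset.sum_ite_eq Finset.univ i (fun j => G i * G j * c)]
      simp [Finset.mem_univ]; ring
    simp_rw [this]
    rw [← Finset.mul_sum]
  rw [expand, e1, e2] at key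
  nlinarith [key, hc]

/-- The character associated to a query vector. -/
noncomputable def xi {n : ℕ} (q : Fin n → Bool) (x : Fin n → Bool) : ℝ :=
  ∏ i, ch (x i && q i)

lemma xi_orth {n : ℕ} (q q' : Fin n → Bool) :
    ∑ x : Fin n → Bool, xi q x * xi q' x = if q = q' then (2:ℝ) ^ n else 0 := by
  have h1 : ∀ x : Fin n → Bool, xi q x * xi q' x
      = ∏ i, (ch (x i && q i) * ch (x i && q' i)) := by
    intro x; rw [Finset.prod_mul_distrib]; rfl
  simp_rw [h1]
  rw [sum_prod_bool (fun i b => ch (b && q i) * ch (b && q' i))]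
  by_cases hqq : q = q'
  · subst hqq
    rw [if_pos rfl]
    have : ∀ i : Fin n, ch (false && q i) * ch (false && q i)
        + ch (true && q i) * ch (true && q i) = 2 := by
      intro i; rw [ch_sq, ch_sq]; norm_num
    simp_rw [this]
    simp
  · rw [if_neg hqq]
    have : ∃ i, q i ≠ q' i := by
      by_contra hco; push_neg at hco; exact hqq (funext hco)
    obtain ⟨i, hi⟩ := this
    apply Finset.prod_eq_zero (Finset.mem_univ i)
    cases h1 : q i <;> cases h2 : q' i <;> simp [h1, h2] at hi ⊢ <;> simp [ch]

lemma ch2_sum {ι : Type*} (s : Finset ι) (f : ι → ZMod 2) :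
    ch2 (∑ i ∈ s, f i) = ∏ i ∈ s, ch2 (f i) := by
  classical
  induction s using Finset.induction_on with
  | empty => simp [ch2]
  | insert _ _ h ih => rw [Finset.sum_insert h, Finset.prod_insert h, ch2_mul, ih]

lemma ch2_ip {n : ℕ} (x q : Fin n → Bool) : ch2 (ip x q) = xi q x := by
  unfold ip xi
  rw [ch2_sum]
  congr 1; funext i
  cases h : (x i && q i) <;> simp [h, ch2, ch]

section Tree

lemma runAns_eq {N p : ℕ} {Q S : Type}
    (probe : (k : Fin p) → Q → S → (Fin k.val → Bool) → Fin N)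
    (y : Fin N → Bool) (q : Q) (s : S) (k : Fin p) :
    runAns probe y q s k
      = y (probe k q s (fun j => runAns probe y q s ⟨j.val, j.isLt.trans k.isLt⟩)) := by
  rw [runAns]

/-- The probe positions along the path determined by answer sequence `a`. -/
def posOf {N p : ℕ} {Q S : Type} (probe : (k : Fin p) → Q → S → (Fin k.val → Bool) → Fin N)
    (q : Q) (s : S) (a : Fin p → Bool) (k : Fin p) : Fin N :=
  probe k q s (fun j => a ⟨j.val, j.isLt.trans k.isLt⟩)

lemma runAns_eq_iff {N p : ℕ} {Q S : Type}
    (probe : (k : Fin p) → Q → S → (Fin k.val → Bool) → Fin N)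
    (y : Fin N → Bool) (q : Q) (s : S) (a : Fin p → Bool) :
    runAns probe y q s = a ↔ ∀ k, y (posOf probe q s a k) = a k := by
  constructor
  · rintro rfl k
    rw [runAns_eq]
    rfl
  · intro hy
    suffices H : ∀ m (hm : m < p), runAns probe y q s ⟨m, hm⟩ = a ⟨m, hm⟩ by
      funext k; exact H k.val k.isLt
    intro m
    induction m using Nat.strong_induction_on with
    | _ m ih =>
      intro hm
      rw [runAns_eq]
      have : (fun j : Fin (⟨m, hm⟩ : Fin p).val =>
            runAns probe y q s ⟨j.val, j.isLt.trans (⟨m, hm⟩ : Fin p).isLt⟩)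
          = fun j => a ⟨j.val, j.isLt.trans (⟨m, hm⟩ : Fin p).isLt⟩ := by
        funext j
        exact ih j.val j.isLt _
      rw [this]
      exact hy ⟨m, hm⟩

lemma chi_update_neg {ι : Type*} [DecidableEq ι] (T : Finset ι) (y : ι → Bool) (i : ι)
    (hi : i ∈ T) : chi T (Function.update y i (!y i)) = - chi T y := by
  unfold chi
  rw [← Finset.mul_prod_erase _ _ hi, ← Finset.mul_prod_erase _ (fun j => ch (y j)) hi]
  have h1 : Function.update y i (!y i) i = !y i := Function.update_self _ _ _
  have h2 : ∀ j ∈ T.erase i, ch (Function.update y i (!y i) j) = ch (y j) := by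
    intro j hj
    rw [Function.update_of_ne (Finset.ne_of_mem_erase hj)]
  rw [h1, ch_not, Finset.prod_congr rfl h2]
  ring

/-- A function computed by `p` adaptive probes has no Fourier mass above level `p`. -/
lemma tree_high_coeff_zero {N p : ℕ} {Q S : Type}
    (probe : (k : Fin p) → Q → S → (Fin k.val → Bool) → Fin N)
    (q : Q) (s : S) (F : (Fin p → Bool) → ℝ)
    (T : Finset (Fin N)) (hT : p < T.card) :
    ∑ y : Fin N → Bool, F (runAns probe y q s) * chi T y = 0 := by
  classical
  rw [← Finset.sum_fiberwise_of_maps_to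
    (g := fun y : Fin N → Bool => runAns probe y q s) (t := Finset.univ)
    (fun x _ => Finset.mem_univ _) (fun y => F (runAns probe y q s) * chi T y)]
  apply Finset.sum_eq_zero
  intro a _
  have hcongr : ∀ y ∈ Finset.univ.filter
      (fun y : Fin N → Bool => runAns probe y q s = a),
      F (runAns probe y q s) * chi T y = F a * chi T y := by
    intro y hy
    rw [(Finset.mem_filter.mp hy).2]
  rw [Finset.sum_congr rfl hcongr, ← Finset.mul_sum]
  set J : Finset (Fin N) := Finset.image (posOf probe q s a) Finset.univ with hJ
  have hJcard : J.card ≤ p := by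
    calc J.card ≤ (Finset.univ : Finset (Fin p)).card := Finset.card_image_le
    _ = p := by simp
  have hnsub : ¬ T ⊆ J := fun hsub => absurd (Finset.card_le_card hsub) (by omega)
  obtain ⟨i, hiT, hiJ⟩ := Finset.not_subset.mp hnsub
  have hpos : ∀ k, posOf probe q s a k ≠ i := by
    intro k hk
    exact hiJ (hk ▸ Finset.mem_image_of_mem _ (Finset.mem_univ k))
  have hzero : ∑ y ∈ Finset.univ.filter
      (fun y : Fin N → Bool => runAns probe y q s = a), chi T y = 0 := by
    apply Finset.sum_involution (fun y _ => Function.update y i (!y i))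
    · intro y _
      rw [chi_update_neg T y i hiT]; ring
    · intro y _ _
      intro heq
      have : Function.update y i (!y i) i = y i := by rw [heq]
      rw [Function.update_self] at this
      exact (Bool.not_ne_self (y i)) this
    · intro y _
      funext j
      by_cases hji : j = i
      · subst hji; simp
      · simp [Function.update_of_ne hji]
    · intro y hy
      rw [Finset.mem_filter] at hy ⊢
      refine ⟨Finset.mem_univ _, ?_⟩
      rw [runAns_eq_iff]
      intro k
      rw [Function.update_of_ne (hpos k)]
      exact (runAns_eq_iff probe y q s a).mp hy.2 k
  rw [hzero, mul_zero]

end Tree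

section Counting

lemma card_wt_eq (n i : ℕ) :
    (Finset.univ.filter (fun y : Fin n → Bool => wt y = i)).card = n.choose i := by
  have h : n.choose i = (Finset.powersetCard i (Finset.univ : Finset (Fin n))).card := by
    rw [Finset.card_powersetCard, Finset.card_univ, Fintype.card_fin]
  rw [h]
  apply Finset.card_bij (fun y _ => Finset.univ.filter (fun j => y j = true))
  · intro y hy
    rw [Finset.mem_powersetCard]
    exact ⟨Finset.filter_subset _ _, (Finset.mem_filter.mp hy).2⟩
  · intro y hy y' hy' heq
    funext j
    have := Finset.ext_iff.mp heq j
    simp only [Finset.mem_filter, Finset.mem_univ, true_and] at this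
    cases hj : y j <;> cases hj' : y' j <;> simp [hj, hj'] at this ⊢
  · intro T hT
    rw [Finset.mem_powersetCard] at hT
    refine ⟨fun j => j ∈ T, ?_, ?_⟩
    · rw [Finset.mem_filter]
      refine ⟨Finset.mem_univ _, ?_⟩
      unfold wt
      rw [← hT.2]
      congr 1
      ext j; simp
    · ext j; simp

lemma card_wt_le (n r : ℕ) :
    Fintype.card {y : Fin n → Bool // wt y ≤ r} = ∑ i ∈ Finset.range (r+1), n.choose i := by
  rw [Fintype.card_subtype]
  rw [Finset.card_eq_sum_card_fiberwise (f := wt) (t := Finset.range (r+1))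
    (fun y hy => Finset.mem_range.mpr (Nat.lt_succ_of_le (Finset.mem_filter.mp hy).2))]
  apply Finset.sum_congr rfl
  intro i hi
  rw [← card_wt_eq n i]
  congr 1
  ext y
  simp only [Finset.mem_filter, Finset.mem_univ, true_and, Finset.filter_filter]
  constructor
  · rintro ⟨_, h2⟩; exact h2
  · rintro h; exact ⟨h ▸ Nat.lt_succ_iff.mp (Finset.mem_range.mp hi), h⟩

lemma card_finset_le (N p : ℕ) :
    ((Finset.univ : Finset (Finset (Fin N))).filter (fun T => T.card ≤ p)).card
      = ∑ i ∈ Finset.range (p+1), N.choose i := by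
  rw [Finset.card_eq_sum_card_fiberwise (f := Finset.card) (t := Finset.range (p+1))
    (fun T hT => Finset.mem_range.mpr (Nat.lt_succ_of_le (Finset.mem_filter.mp hT).2))]
  apply Finset.sum_congr rfl
  intro i hi
  have h : (Finset.powersetCard i (Finset.univ : Finset (Fin N))).card = N.choose i := by
    rw [Finset.card_powersetCard, Finset.card_univ, Fintype.card_fin]
  rw [← h, Finset.powersetCard_eq_filter, Finset.powerset_univ]
  congr 1
  ext T
  simp only [Finset.mem_filter, Finset.mem_univ, true_and, Finset.filter_filter]
  constructor
  · rintro ⟨_, h2⟩; exact h2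
  · rintro h2; exact ⟨h2 ▸ Nat.lt_succ_iff.mp (Finset.mem_range.mp hi), h2⟩

lemma sum_choose_le (N p : ℕ) (hN : 1 ≤ N) :
    ∑ i ∈ Finset.range (p+1), N.choose i ≤ (2*N)^p := by
  calc ∑ i ∈ Finset.range (p+1), N.choose i
      ≤ ∑ i ∈ Finset.range (p+1), N^p := by
        apply Finset.sum_le_sum
        intro i hi
        exact le_trans (Nat.choose_le_pow N i)
          (Nat.pow_le_pow_right hN (Nat.lt_succ_iff.mp (Finset.mem_range.mp hi)))
    _ = (p+1) * N^p := by rw [Finset.sum_const, Finset.card_range, smul_eq_mul]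
    _ ≤ 2^p * N^p := by
        apply Nat.mul_le_mul_right
        exact Nat.succ_le_of_lt (Nat.lt_two_pow_self)
    _ = (2*N)^p := by rw [mul_pow]

end Counting

end IPLB

set_option maxHeartbeats 1000000 in
/-- Every `(p,ε)`-data structure (i.e. a `(p,0,ε)`-error-correcting data
structure) of length `N` for the inner product problem `IP_{n,r}` satisfies
`N ≥ (1/2)·2^{(log₂ B(n,r) − 2·log₂(1/(1−2ε)) − 1)/p}`. -/
theorem ip_data_structure_length_lower_bound (n r p N : ℕ)
    (hn : 0 < n) (hr : 0 < r) (hp : 0 < p) (hrn : r ≤ n)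
    (ε : ℝ) (hε0 : 0 ≤ ε) (hε : ε < 1 / 2)
    (ds : ECDS (Fin n → Bool) {y : Fin n → Bool // wt y ≤ r} (ZMod 2) p N 0 ε
      (fun x q => ip x q.val)) :
    (1 / 2 : ℝ) * 2 ^ ((Real.logb 2 (∑ i ∈ Finset.range (r + 1), (n.choose i : ℝ)) -
        2 * Real.logb 2 (1 / (1 - 2 * ε)) - 1) / (p : ℝ)) ≤ (N : ℝ) := by
  classical
  open IPLB in
  set Qt := {y : Fin n → Bool // wt y ≤ r}
  -- Step 1 : N ≥ 1
  have q0 : Qt := ⟨fun _ => false, by simp [wt]⟩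
  have hN : 1 ≤ N := (ds.probe ⟨0, hp⟩ q0 ⟨0, ds.seeds_pos⟩ (fun j => j.elim0)).pos
  -- the decoder's sign function
  set h : Qt → Fin ds.seeds → (Fin N → Bool) → ℝ :=
    fun q s y => IPLB.ch2 (ds.out q s (runAns ds.probe y q s)) with hdefh
  -- Step 2 : for every query there is a good seed
  have good : ∀ q : Qt, ∃ s : Fin ds.seeds,
      (1 - 2*ε) * 2^n ≤ ∑ x : Fin n → Bool, h q s (ds.enc x) * IPLB.xi q.val x := by
    intro q
    have inner : ∀ x : Fin n → Bool,
        (1 - 2*ε) * (ds.seeds : ℝ) ≤ ∑ s : Fin ds.seeds, h q s (ds.enc x) * IPLB.xi q.val x := by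
      intro x
      have hc := ds.correct q x (ds.enc x) (by simp)
      have hterm : ∀ s : Fin ds.seeds, h q s (ds.enc x) * IPLB.xi q.val x
          = if ds.out q s (runAns ds.probe (ds.enc x) q s) = ip x q.val then (1:ℝ) else -1 := by
        intro s
        rw [hdefh]
        simp only
        rw [← IPLB.ch2_ip x q.val, IPLB.ch2_mul_eq]
      simp_rw [hterm]
      rw [Finset.sum_ite, Finset.sum_const, Finset.sum_const]
      set C := (Finset.univ.filter (fun s : Fin ds.seeds =>
        ds.out q s (runAns ds.probe (ds.enc x) q s) = ip x q.val)).card with hC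
      have hcompl : (Finset.univ.filter (fun s : Fin ds.seeds =>
          ¬ (ds.out q s (runAns ds.probe (ds.enc x) q s) = ip x q.val))).card
          = ds.seeds - C := by
        have := Finset.card_filter_add_card_filter_not
          (s := (Finset.univ : Finset (Fin ds.seeds)))
          (p := fun s => ds.out q s (runAns ds.probe (ds.enc x) q s) = ip x q.val)
        simp only [Finset.card_univ, Fintype.card_fin] at this
        omega
      rw [hcompl]
      have hCs : C ≤ ds.seeds := by
        calc C ≤ (Finset.univ : Finset (Fin ds.seeds)).card := Finset.card_filter_le _ _
        _ = ds.seeds := by simp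
      have hcast : ((ds.seeds - C : ℕ) : ℝ) = (ds.seeds : ℝ) - C := by
        push_cast [hCs]; ring
      simp only [nsmul_eq_mul]
      rw [hcast]
      have hC' : (1 - ε) * (ds.seeds : ℝ) ≤ C := hc
      have hε1 : ε ≤ 1 := by linarith
      nlinarith [ds.seeds_pos, hC']
    have total : (1 - 2*ε) * 2^n * (ds.seeds : ℝ)
        ≤ ∑ s : Fin ds.seeds, ∑ x : Fin n → Bool, h q s (ds.enc x) * IPLB.xi q.val x := by
      rw [Finset.sum_comm]
      calc (1 - 2*ε) * 2^n * (ds.seeds : ℝ)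
          = ∑ _x : Fin n → Bool, (1 - 2*ε) * (ds.seeds : ℝ) := by
            rw [Finset.sum_const, Finset.card_univ]
            simp [Fintype.card_fun]
            ring
        _ ≤ _ := Finset.sum_le_sum (fun x _ => inner x)
    by_contra hcon
    push_neg at hcon
    have : ∑ s : Fin ds.seeds, ∑ x : Fin n → Bool, h q s (ds.enc x) * IPLB.xi q.val x
        < ∑ _s : Fin ds.seeds, (1 - 2*ε) * 2^n := by
      apply Finset.sum_lt_sum_of_nonempty
      · exact Finset.univ_nonempty_iff.mpr ⟨⟨0, ds.seeds_pos⟩⟩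
      · intro s _; exact hcon s
    rw [Finset.sum_const, Finset.card_univ, Fintype.card_fin, nsmul_eq_mul] at this
    nlinarith [this, total]
  -- the correlation matrix entries
  set M : Finset (Fin N) → Qt → ℝ :=
    fun T q => ∑ x : Fin n → Bool, IPLB.chi T (ds.enc x) * IPLB.xi q.val x with hdefM
  set Sp : Finset (Finset (Fin N)) := Finset.univ.filter (fun T => T.card ≤ p) with hdefSp
  -- Step 3 : per-query Fourier bound
  have perq : ∀ q : Qt, ((1 - 2*ε) * 2^n)^2 ≤ ∑ T ∈ Sp, (M T q)^2 := by
    intro q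
    obtain ⟨s, hs⟩ := good q
    set hh : (Fin N → Bool) → ℝ := fun y => h q s y with hdefhh
    set co : Finset (Fin N) → ℝ := fun T => ∑ y : Fin N → Bool, hh y * IPLB.chi T y with hdefco
    -- expansion step
    have exp1 : (2:ℝ)^N * ∑ x : Fin n → Bool, hh (ds.enc x) * IPLB.xi q.val x
        = ∑ T ∈ Sp, co T * M T q := by
      have e1 : ∀ x : Fin n → Bool, (2:ℝ)^N * hh (ds.enc x)
          = ∑ T : Finset (Fin N), co T * IPLB.chi T (ds.enc x) := by
        intro x
        rw [hdefco]
        rw [IPLB.fourier_expand hh (ds.enc x)]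
        simp [Fintype.card_fin]
      calc (2:ℝ)^N * ∑ x : Fin n → Bool, hh (ds.enc x) * IPLB.xi q.val x
          = ∑ x : Fin n → Bool, ((2:ℝ)^N * hh (ds.enc x)) * IPLB.xi q.val x := by
            rw [Finset.mul_sum]; congr 1; funext x; ring
        _ = ∑ x : Fin n → Bool, (∑ T : Finset (Fin N), co T * IPLB.chi T (ds.enc x))
              * IPLB.xi q.val x := by
            apply Finset.sum_congr rfl; intro x _; rw [e1]
        _ = ∑ T : Finset (Fin N), co T * M T q := by
            simp_rw [Finset.sum_mul]
            rw [Finset.sum_comm]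
            apply Finset.sum_congr rfl; intro T _
            rw [hdefM]
            simp only
            rw [Finset.mul_sum]
            congr 1; funext x; ring
        _ = ∑ T ∈ Sp, co T * M T q := by
            rw [← Finset.sum_filter_add_sum_filter_not Finset.univ (fun T => T.card ≤ p)
              (fun T => co T * M T q)]
            have hz : ∑ T ∈ Finset.univ.filter (fun T : Finset (Fin N) => ¬ T.card ≤ p),
                co T * M T q = 0 := by
              apply Finset.sum_eq_zero
              intro T hT
              have hTc : p < T.card := by
                have := (Finset.mem_filter.mp hT).2; omega
              have : co T = 0 := by
                rw [hdefco]
                exact IPLB.tree_high_coeff_zero ds.probe q s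
                  (fun a => IPLB.ch2 (ds.out q s a)) T hTc
              rw [this, zero_mul]
            rw [hz, add_zero, hdefSp]
    -- Parseval bound on the coefficients
    have parsv : ∑ T ∈ Sp, (co T)^2 ≤ (2:ℝ)^N * (2:ℝ)^N := by
      calc ∑ T ∈ Sp, (co T)^2 ≤ ∑ T : Finset (Fin N), (co T)^2 := by
            apply Finset.sum_le_sum_of_subset_of_nonneg (Finset.filter_subset _ _)
            intro T _ _; exact sq_nonneg _
        _ = (2:ℝ)^N * ∑ y : Fin N → Bool, (hh y)^2 := by
            rw [hdefco]
            have := IPLB.parseval hh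
            simpa [Fintype.card_fin] using this
        _ = (2:ℝ)^N * (2:ℝ)^N := by
            congr 1
            have : ∀ y : Fin N → Bool, (hh y)^2 = 1 := by
              intro y; rw [sq, hdefhh, hdefh]; exact IPLB.ch2_sq _
            simp_rw [this]
            simp [Fintype.card_fun]
        _ = _ := by rfl
    -- Cauchy–Schwarz
    have cs : (∑ T ∈ Sp, co T * M T q)^2
        ≤ (∑ T ∈ Sp, (co T)^2) * ∑ T ∈ Sp, (M T q)^2 :=
      Finset.sum_mul_sq_le_sq_mul_sq Sp co (fun T => M T q)
    have hnn : (0:ℝ) ≤ (1 - 2*ε) * 2^n := by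
      have : (0:ℝ) ≤ 1 - 2*ε := by linarith
      positivity
    have sqb : ((1 - 2*ε) * 2^n)^2 ≤ (∑ x : Fin n → Bool, hh (ds.enc x) * IPLB.xi q.val x)^2 :=
      pow_le_pow_left₀ hnn hs 2
    have h2N : (0:ℝ) < (2:ℝ)^N := by positivity
    have key : ((2:ℝ)^N)^2 * ((1 - 2*ε) * 2^n)^2
        ≤ ((2:ℝ)^N)^2 * ∑ T ∈ Sp, (M T q)^2 := by
      calc ((2:ℝ)^N)^2 * ((1 - 2*ε) * 2^n)^2
          ≤ ((2:ℝ)^N)^2 * (∑ x : Fin n → Bool, hh (ds.enc x) * IPLB.xi q.val x)^2 := by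
            apply mul_le_mul_of_nonneg_left sqb (by positivity)
        _ = ((2:ℝ)^N * ∑ x : Fin n → Bool, hh (ds.enc x) * IPLB.xi q.val x)^2 := by ring
        _ = (∑ T ∈ Sp, co T * M T q)^2 := by rw [exp1]
        _ ≤ (∑ T ∈ Sp, (co T)^2) * ∑ T ∈ Sp, (M T q)^2 := cs
        _ ≤ ((2:ℝ)^N * (2:ℝ)^N) * ∑ T ∈ Sp, (M T q)^2 := by
            apply mul_le_mul_of_nonneg_right parsv
            exact Finset.sum_nonneg (fun T _ => sq_nonneg _)
        _ = ((2:ℝ)^N)^2 * ∑ T ∈ Sp, (M T q)^2 := by ring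
    exact le_of_mul_le_mul_left key (by positivity)
  -- Step 4 : sum over queries and apply Bessel
  have orth : ∀ q q' : Qt, ∑ x : Fin n → Bool, IPLB.xi q.val x * IPLB.xi q'.val x
      = if q = q' then (2:ℝ)^n else 0 := by
    intro q q'
    rw [IPLB.xi_orth]
    by_cases hqq : q = q'
    · subst hqq; simp
    · rw [if_neg hqq, if_neg (fun hv => hqq (Subtype.ext hv))]
  have besselQ : ∀ T : Finset (Fin N), ∑ q : Qt, (M T q)^2 ≤ (2:ℝ)^n * (2:ℝ)^n := by
    intro T
    calc ∑ q : Qt, (M T q)^2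
        ≤ (2:ℝ)^n * ∑ x : Fin n → Bool, (IPLB.chi T (ds.enc x))^2 := by
          exact IPLB.bessel (fun q : Qt => IPLB.xi q.val) ((2:ℝ)^n) (by positivity) orth
            (fun x => IPLB.chi T (ds.enc x))
      _ = (2:ℝ)^n * (2:ℝ)^n := by
          congr 1
          have : ∀ x : Fin n → Bool, (IPLB.chi T (ds.enc x))^2 = 1 := by
            intro x; rw [sq]; exact IPLB.chi_sq _ _
          simp_rw [this]
          simp [Fintype.card_fun]
  have sumq : (Fintype.card Qt : ℝ) * ((1 - 2*ε) * 2^n)^2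
      ≤ (Sp.card : ℝ) * ((2:ℝ)^n * (2:ℝ)^n) := by
    calc (Fintype.card Qt : ℝ) * ((1 - 2*ε) * 2^n)^2
        = ∑ _q : Qt, ((1 - 2*ε) * 2^n)^2 := by
          rw [Finset.sum_const, Finset.card_univ, nsmul_eq_mul]
      _ ≤ ∑ q : Qt, ∑ T ∈ Sp, (M T q)^2 := Finset.sum_le_sum (fun q _ => perq q)
      _ = ∑ T ∈ Sp, ∑ q : Qt, (M T q)^2 := Finset.sum_comm
      _ ≤ ∑ _T ∈ Sp, (2:ℝ)^n * (2:ℝ)^n := Finset.sum_le_sum (fun T _ => besselQ T)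
      _ = (Sp.card : ℝ) * ((2:ℝ)^n * (2:ℝ)^n) := by
          rw [Finset.sum_const, nsmul_eq_mul]
  -- Step 5 : clean up to the cardinality bound
  have hBcard : (Fintype.card Qt : ℝ) = ∑ i ∈ Finset.range (r+1), (n.choose i : ℝ) := by
    rw [IPLB.card_wt_le n r]
    push_cast
    rfl
  have hSpcard : (Sp.card : ℝ) ≤ ((2*N : ℕ) : ℝ)^p := by
    have h1 : Sp.card ≤ (2*N)^p := by
      rw [hdefSp, IPLB.card_finset_le N p]
      exact IPLB.sum_choose_le N p hN
    calc (Sp.card : ℝ) ≤ (((2*N)^p : ℕ) : ℝ) := by exact_mod_cast h1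
      _ = ((2*N : ℕ) : ℝ)^p := by push_cast; ring
  set Br : ℝ := ∑ i ∈ Finset.range (r+1), (n.choose i : ℝ) with hdefBr
  have hmain : Br * (1 - 2*ε)^2 ≤ (2*(N:ℝ))^p := by
    have h4n : (0:ℝ) < (2:ℝ)^n * (2:ℝ)^n := by positivity
    have expand : (Fintype.card Qt : ℝ) * ((1 - 2*ε) * 2^n)^2
        = (Br * (1 - 2*ε)^2) * ((2:ℝ)^n * (2:ℝ)^n) := by
      rw [hBcard]; ring
    rw [expand] at sumq
    have h2 : Br * (1 - 2*ε)^2 ≤ (Sp.card : ℝ) := le_of_mul_le_mul_right sumq h4n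
    calc Br * (1 - 2*ε)^2 ≤ (Sp.card : ℝ) := h2
      _ ≤ ((2*N : ℕ) : ℝ)^p := hSpcard
      _ = (2*(N:ℝ))^p := by push_cast; ring
  -- Step 6 : logarithms
  have ht : (0:ℝ) < 1 - 2*ε := by linarith
  have hBr1 : (1:ℝ) ≤ Br := by
    rw [hdefBr]
    calc (1:ℝ) = ((n.choose 0 : ℕ) : ℝ) := by simp
      _ ≤ ∑ i ∈ Finset.range (r+1), (n.choose i : ℝ) := by
          apply Finset.single_le_sum (f := fun i => ((n.choose i : ℕ) : ℝ))
          · intro i _; positivity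
          · simp
  have hBrpos : (0:ℝ) < Br := by linarith
  have h2N : (0:ℝ) < 2*(N:ℝ) := by
    have : (1:ℝ) ≤ (N:ℝ) := by exact_mod_cast hN
    linarith
  have hlog1 : Real.logb 2 (Br * (1 - 2*ε)^2) ≤ (p:ℝ) * Real.logb 2 (2*(N:ℝ)) := by
    calc Real.logb 2 (Br * (1 - 2*ε)^2)
        ≤ Real.logb 2 ((2*(N:ℝ))^p) := by
          apply Real.logb_le_logb_of_le one_lt_two (by positivity) hmain
      _ = (p:ℝ) * Real.logb 2 (2*(N:ℝ)) := Real.logb_pow 2 _ p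
  have hlog2 : Real.logb 2 (Br * (1 - 2*ε)^2)
      = Real.logb 2 Br - 2 * Real.logb 2 (1 / (1 - 2*ε)) := by
    rw [Real.logb_mul (ne_of_gt hBrpos) (by positivity)]
    rw [Real.logb_pow]
    rw [one_div, Real.logb_inv]
    ring
  have hexp : (Real.logb 2 Br - 2 * Real.logb 2 (1 / (1 - 2 * ε)) - 1) / (p : ℝ)
      ≤ Real.logb 2 (2*(N:ℝ)) := by
    have hppos : (0:ℝ) < (p:ℝ) := by exact_mod_cast hp
    rw [div_le_iff₀ hppos]
    have h1 : Real.logb 2 Br - 2 * Real.logb 2 (1 / (1 - 2 * ε))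
        ≤ (p:ℝ) * Real.logb 2 (2*(N:ℝ)) := by
      rw [← hlog2]; exact hlog1
    linarith [h1, mul_comm (p:ℝ) (Real.logb 2 (2*(N:ℝ)))]
  have hfinal : (2:ℝ) ^ ((Real.logb 2 Br - 2 * Real.logb 2 (1 / (1 - 2 * ε)) - 1) / (p : ℝ))
      ≤ 2*(N:ℝ) := by
    calc (2:ℝ) ^ ((Real.logb 2 Br - 2 * Real.logb 2 (1 / (1 - 2 * ε)) - 1) / (p : ℝ))
        ≤ (2:ℝ) ^ (Real.logb 2 (2*(N:ℝ))) := by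
          exact (Real.rpow_le_rpow_left_iff one_lt_two).mpr hexp
      _ = 2*(N:ℝ) := Real.rpow_logb (by norm_num) (by norm_num) h2N
  linarith [hfinal]
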